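/- arXiv:2212.04724 — 4 statements merged into one kernel-verified Lean document; each statement's English description precedes it below -/
import Mathlib

section
/- If a production set T ⊆ ℝ₊ⁿ⁺ᵖ has Λ-bounded returns to scale, then there exists a smallest technology T_Λ containing T that satisfies a Λ-returns to scale assumption; i.e., for any T' with T ⊆ T' and T' satisfying a Λ-returns to scale assumption, T_Λ ⊆ T'. -/
open scoped ENNReal

/-- Points of `ℝ₊ⁿ⁺ᵖ`: nonnegative input-output vectors. -/
def nonneg (n p : ℕ) : Set ((Fin n → ℝ) × (Fin p → ℝ)) :=
  {v | 0 ≤ v.1 ∧ 0 ≤ v.2}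

/-- Scaling of a production vector by `l` under `α`-returns to scale,
with the conventions at `α = 0` and `α = ∞`. -/
noncomputable def scalePt {n p : ℕ} (α : ℝ≥0∞) (l : ℝ)
    (v : (Fin n → ℝ) × (Fin p → ℝ)) : (Fin n → ℝ) × (Fin p → ℝ) :=
  if α = 0 then (l • v.1, v.2)
  else if α = ⊤ then (v.1, l • v.2)
  else (l • v.1, l ^ α.toReal • v.2)

/-- `T` satisfies an `α`-returns to scale assumption. -/
def satRTS {n p : ℕ} (α : ℝ≥0∞) (T : Set ((Fin n → ℝ) × (Fin p → ℝ))) : Prop :=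
  ∀ v ∈ T, ∀ l : ℝ, 0 < l → scalePt α l v ∈ T

/-- `T` satisfies a `Λ`-returns to scale assumption. -/
def satLambdaRTS {n p : ℕ} (Λ : Set ℝ≥0∞)
    (T : Set ((Fin n → ℝ) × (Fin p → ℝ))) : Prop :=
  ∃ F : ℝ≥0∞ → Set ((Fin n → ℝ) × (Fin p → ℝ)),
    (∀ α ∈ Λ, satRTS α (F α)) ∧ T = ⋂ α ∈ Λ, F α

/-- The returns to scale of `T` are `Λ`-bounded. -/
def lambdaBounded {n p : ℕ} (Λ : Set ℝ≥0∞)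
    (T : Set ((Fin n → ℝ) × (Fin p → ℝ))) : Prop :=
  ∃ T', T ⊆ T' ∧ satLambdaRTS Λ T'

/-- Free disposability of inputs and outputs. -/
def freeDisposal {n p : ℕ} (T : Set ((Fin n → ℝ) × (Fin p → ℝ))) : Prop :=
  ∀ v ∈ T, ∀ u w, v.1 ≤ u → 0 ≤ w → w ≤ v.2 → (u, w) ∈ T

/-- If a production set `T ⊆ ℝ₊ⁿ⁺ᵖ` has `Λ`-bounded returns to scale, then there exists a
smallest technology containing `T` that satisfies a `Λ`-returns to scale assumption. -/
theorem stmt0 (n p : ℕ) (Λ : Set ℝ≥0∞) (T : Set ((Fin n → ℝ) × (Fin p → ℝ)))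
    (hT : T ⊆ nonneg n p) (hbdd : lambdaBounded Λ T) :
    ∃ TΛ : Set ((Fin n → ℝ) × (Fin p → ℝ)),
      T ⊆ TΛ ∧ satLambdaRTS Λ TΛ ∧
      ∀ T', T ⊆ T' → satLambdaRTS Λ T' → TΛ ⊆ T' := by
  classical
  set S := {T' | T ⊆ T' ∧ satLambdaRTS Λ T'} with hS
  have hF : ∀ T' ∈ S, ∃ F : ℝ≥0∞ → Set ((Fin n → ℝ) × (Fin p → ℝ)),
      (∀ α ∈ Λ, satRTS α (F α)) ∧ T' = ⋂ α ∈ Λ, F α := fun T' hT' => hT'.2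
  choose! F hF1 hF2 using hF
  refine ⟨⋂₀ S, fun v hv => Set.mem_sInter.2 fun T' hT' => hT'.1 hv, ?_, ?_⟩
  · refine ⟨fun α => ⋂ T' ∈ S, F T' α, ?_, ?_⟩
    · intro α hα v hv l hl
      simp only [Set.mem_iInter] at hv ⊢
      exact fun T' hT' => hF1 T' hT' α hα v (hv T' hT') l hl
    · ext v
      simp only [Set.mem_sInter, Set.mem_iInter]
      constructor
      · intro h α hα T' hT'
        have hv := h T' hT'
        rw [hF2 T' hT'] at hv
        simp only [Set.mem_iInter] at hv
        exact hv α hα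
      · intro h T' hT'
        rw [hF2 T' hT']
        simp only [Set.mem_iInter]
        exact fun α hα => h α hα T' hT'
  · intro T' hT1 hT2 v hv
    exact hv T' ⟨hT1, hT2⟩
end

section
/- Let Λ = [α₋, α₊] be a closed connected subinterval of [0,∞) with α₊ < ∞. If T satisfies a Λ-returns to scale assumption where each T_α (α ∈ Λ) satisfies free disposability, then T satisfies a left-α₊ returns to scale assumption: for all (x,y) ∈ T and all λ ∈ (0,1], (λx, λ^{α₊} y) ∈ T. -/
open scoped ENNReal

/-- A `[α₋, α₊]`-returns to scale assumption (with `α₊ < ∞`) with freely disposable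
witnesses implies a left-`α₊` returns to scale assumption. -/
theorem stmt4 (n p : ℕ) (a b : ℝ≥0∞) (hab : a ≤ b) (hb : b ≠ ⊤)
    (T : Set ((Fin n → ℝ) × (Fin p → ℝ)))
    (F : ℝ≥0∞ → Set ((Fin n → ℝ) × (Fin p → ℝ)))
    (hF : ∀ α ∈ Set.Icc a b, satRTS α (F α) ∧ freeDisposal (F α) ∧ F α ⊆ nonneg n p)
    (hT : T = ⋂ α ∈ Set.Icc a b, F α) :
    ∀ v ∈ T, ∀ l : ℝ, 0 < l → l ≤ 1 → (l • v.1, l ^ b.toReal • v.2) ∈ T := by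
  subst hT
  intro v hv l hl hl1
  simp only [Set.mem_iInter] at hv ⊢
  intro α hα
  obtain ⟨hrts, hfd, hnn⟩ := hF α hα
  have hvα := hv α hα
  have hy : 0 ≤ v.2 := (hnn hvα).2
  have hbt : 0 ≤ b.toReal := ENNReal.toReal_nonneg
  have hlb : 0 ≤ l ^ b.toReal := Real.rpow_nonneg hl.le _
  have hw : 0 ≤ l ^ b.toReal • v.2 := fun i => mul_nonneg hlb (hy i)
  have hs := hrts v hvα l hl
  unfold scalePt at hs
  by_cases h0 : α = 0
  · rw [if_pos h0] at hs
    have hle1 : l ^ b.toReal ≤ 1 := Real.rpow_le_one hl.le hl1 hbt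
    exact hfd _ hs (l • v.1) (l ^ b.toReal • v.2) le_rfl hw
      (fun i => mul_le_of_le_one_left (hy i) hle1)
  · have htop : α ≠ ⊤ := fun h => hb (top_le_iff.mp (h ▸ hα.2))
    rw [if_neg h0, if_neg htop] at hs
    have hexp : α.toReal ≤ b.toReal := ENNReal.toReal_mono hb hα.2
    have hpow : l ^ b.toReal ≤ l ^ α.toReal :=
      Real.rpow_le_rpow_of_exponent_ge hl hl1 hexp
    exact hfd _ hs (l • v.1) (l ^ b.toReal • v.2) le_rfl hw
      (fun i => mul_le_mul_of_nonneg_right hpow (hy i))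
end

section
/- For α ∈ (0,∞) and a point (x_k, y_k) ∈ ℝ₊ⁿ⁺ᵖ with x_k ≠ 0 and y_k ≠ 0, the set Q_{α,1}(x_k,y_k) = {(x,y) ∈ ℝ₊ⁿ⁺ᵖ : ∃λ ≥ 0, x ≥ λ^{1/α} x_k and y ≤ λ y_k} is the smallest subset of ℝ₊ⁿ⁺ᵖ containing (x_k, y_k) that satisfies free disposability, closedness, and the α-returns to scale assumption. -/
/-- `T` satisfies an `α`-returns to scale assumption (`α` a positive real). -/
def satRTSR {n p : ℕ} (α : ℝ) (T : Set ((Fin n → ℝ) × (Fin p → ℝ))) : Prop :=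
  ∀ v ∈ T, ∀ l : ℝ, 0 < l → (l • v.1, l ^ α • v.2) ∈ T

/-- The individual technology `Q_{α,1}(x_k, y_k)` as a subset of `ℝ₊ⁿ⁺ᵖ`. -/
noncomputable def QSet {n p : ℕ} (α : ℝ) (xk : Fin n → ℝ) (yk : Fin p → ℝ) :
    Set ((Fin n → ℝ) × (Fin p → ℝ)) :=
  {v | (0 ≤ v.1 ∧ 0 ≤ v.2) ∧
    ∃ l : ℝ, 0 ≤ l ∧ l ^ (1 / α) • xk ≤ v.1 ∧ v.2 ≤ l • yk}

/-- `Q_{α,1}(x_k,y_k)` is the smallest subset of `ℝ₊ⁿ⁺ᵖ` containing `(x_k, y_k)` that is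
freely disposable, closed, and satisfies an `α`-returns to scale assumption. -/
theorem stmt8 (n p : ℕ) (α : ℝ) (hα : 0 < α)
    (xk : Fin n → ℝ) (yk : Fin p → ℝ)
    (hxk : 0 ≤ xk) (hyk : 0 ≤ yk) (hxk0 : xk ≠ 0) (hyk0 : yk ≠ 0) :
    (xk, yk) ∈ QSet α xk yk ∧
    QSet α xk yk ⊆ nonneg n p ∧
    freeDisposal (QSet α xk yk) ∧
    IsClosed (QSet α xk yk) ∧
    satRTSR α (QSet α xk yk) ∧
    ∀ S : Set ((Fin n → ℝ) × (Fin p → ℝ)), S ⊆ nonneg n p → (xk, yk) ∈ S →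
      freeDisposal S → IsClosed S → satRTSR α S → QSet α xk yk ⊆ S := by
  obtain ⟨i0, hi0⟩ : ∃ i, 0 < yk i := by
    by_contra h
    push_neg at h
    exact hyk0 (funext fun i => le_antisymm (h i) (hyk i))
  have hα' : (0:ℝ) < 1 / α := by positivity
  have hrpc : Continuous fun t : ℝ => t ^ (1 / α) :=
    continuous_id.rpow_const fun x => Or.inr hα'.le
  refine ⟨⟨⟨hxk, hyk⟩, 1, zero_le_one, by simp [Real.one_rpow], by simp⟩,
    fun v hv => ⟨hv.1.1, hv.1.2⟩, ?_, ?_, ?_, ?_⟩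
  · rintro v ⟨⟨hv1, hv2⟩, l, hl, hlx, hly⟩ u w hu hw hwv
    exact ⟨⟨le_trans hv1 hu, hw⟩, l, hl, le_trans hlx hu, le_trans hwv hly⟩
  · -- closedness
    have hchar : QSet α xk yk =
        ((⋂ j, {v : (Fin n → ℝ) × (Fin p → ℝ) | 0 ≤ v.1 j}) ∩ ⋂ i, {v | 0 ≤ v.2 i}) ∩
          ((⋂ i, {v : (Fin n → ℝ) × (Fin p → ℝ) | yk i = 0 → v.2 i ≤ 0}) ∩
            ⋂ i, ⋂ j, {v : (Fin n → ℝ) × (Fin p → ℝ) |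
              0 < yk i → (v.2 i / yk i) ^ (1 / α) * xk j ≤ v.1 j}) := by
      ext ⟨x, y⟩
      simp only [QSet, Set.mem_setOf_eq, Set.mem_inter_iff, Set.mem_iInter]
      constructor
      · rintro ⟨⟨hx, hy⟩, l, hl, hlx, hly⟩
        refine ⟨⟨fun j => hx j, fun i => hy i⟩, fun i hi => ?_, fun i j hi => ?_⟩
        · have := hly i
          simp only [Pi.smul_apply, smul_eq_mul, hi, mul_zero] at this
          exact this
        · have hratio : y i / yk i ≤ l := by
            rw [div_le_iff₀ hi]
            have := hly i
            simpa [Pi.smul_apply, smul_eq_mul, mul_comm] using this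
          have h1 : (y i / yk i) ^ (1 / α) ≤ l ^ (1 / α) :=
            Real.rpow_le_rpow (div_nonneg (hy i) hi.le) hratio hα'.le
          calc (y i / yk i) ^ (1 / α) * xk j ≤ l ^ (1 / α) * xk j :=
                mul_le_mul_of_nonneg_right h1 (hxk j)
            _ ≤ x j := by simpa [Pi.smul_apply, smul_eq_mul] using hlx j
      · rintro ⟨⟨hx, hy⟩, h0, hpos⟩
        have hx' : (0:Fin n → ℝ) ≤ x := fun j => hx j
        have hy' : (0:Fin p → ℝ) ≤ y := fun i => hy i
        set s : Finset (Fin p) := Finset.univ.filter fun i => 0 < yk i with hs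
        have hne : s.Nonempty := ⟨i0, by simp [hs, hi0]⟩
        set l : ℝ := s.sup' hne fun i => y i / yk i with hldef
        have hmem : ∀ i ∈ s, 0 < yk i := fun i hi => by
          simpa [hs] using (Finset.mem_filter.mp hi).2
        have hi0s : i0 ∈ s := by
          rw [hs]; exact Finset.mem_filter.mpr ⟨Finset.mem_univ _, hi0⟩
        have hl0 : 0 ≤ l :=
          le_trans (div_nonneg (hy i0) hi0.le) (hldef ▸ Finset.le_sup' (fun i => y i / yk i) hi0s)
        refine ⟨⟨hx', hy'⟩, l, hl0, ?_, ?_⟩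
        · obtain ⟨i, hi, hieq⟩ := Finset.exists_mem_eq_sup' hne fun i => y i / yk i
          intro j
          simp only [Pi.smul_apply, smul_eq_mul, hldef, hieq]
          exact hpos i j (hmem i hi)
        · intro i
          simp only [Pi.smul_apply, smul_eq_mul]
          by_cases hi : 0 < yk i
          · have his : i ∈ s := by rw [hs]; exact Finset.mem_filter.mpr ⟨Finset.mem_univ _, hi⟩
            have : y i / yk i ≤ l := hldef ▸ Finset.le_sup' (fun i => y i / yk i) his
            calc y i = y i / yk i * yk i := by field_simp
              _ ≤ l * yk i := mul_le_mul_of_nonneg_right this hi.le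
          · have hzi : yk i = 0 := le_antisymm (not_lt.mp hi) (hyk i)
            rw [hzi, mul_zero]
            exact h0 i hzi
    rw [hchar]
    refine IsClosed.inter (IsClosed.inter ?_ ?_) (IsClosed.inter ?_ ?_)
    · exact isClosed_iInter fun j =>
        isClosed_le continuous_const ((continuous_apply j).comp continuous_fst)
    · exact isClosed_iInter fun i =>
        isClosed_le continuous_const ((continuous_apply i).comp continuous_snd)
    · refine isClosed_iInter fun i => ?_
      by_cases h : yk i = 0
      · have : {v : (Fin n → ℝ) × (Fin p → ℝ) | yk i = 0 → v.2 i ≤ 0}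
            = {v | v.2 i ≤ 0} := by ext v; simp [h]
        rw [this]
        exact isClosed_le ((continuous_apply i).comp continuous_snd) continuous_const
      · have : {v : (Fin n → ℝ) × (Fin p → ℝ) | yk i = 0 → v.2 i ≤ 0}
            = Set.univ := by ext v; simp [h]
        rw [this]; exact isClosed_univ
    · refine isClosed_iInter fun i => isClosed_iInter fun j => ?_
      by_cases h : 0 < yk i
      · have : {v : (Fin n → ℝ) × (Fin p → ℝ) |
              0 < yk i → (v.2 i / yk i) ^ (1 / α) * xk j ≤ v.1 j}
            = {v | (v.2 i / yk i) ^ (1 / α) * xk j ≤ v.1 j} := by ext v; simp [h]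
        rw [this]
        refine isClosed_le ?_ ((continuous_apply j).comp continuous_fst)
        exact ((hrpc.comp (((continuous_apply i).comp continuous_snd).div_const _)).mul
          continuous_const)
      · have : {v : (Fin n → ℝ) × (Fin p → ℝ) |
              0 < yk i → (v.2 i / yk i) ^ (1 / α) * xk j ≤ v.1 j}
            = Set.univ := by ext v; simp [h]
        rw [this]; exact isClosed_univ
  · -- satRTSR
    rintro ⟨x, y⟩ ⟨⟨hx, hy⟩, l, hl, hlx, hly⟩ t ht
    have htα : (0:ℝ) ≤ t ^ α := Real.rpow_nonneg ht.le α
    refine ⟨⟨smul_nonneg ht.le hx, smul_nonneg htα hy⟩,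
      t ^ α * l, mul_nonneg htα hl, ?_, ?_⟩
    · have hkey : (t ^ α * l) ^ (1 / α) = t * l ^ (1 / α) := by
        rw [Real.mul_rpow htα hl, ← Real.rpow_mul ht.le,
          mul_one_div_cancel hα.ne', Real.rpow_one]
      intro j
      simp only [Pi.smul_apply, smul_eq_mul, hkey]
      rw [mul_assoc]
      exact mul_le_mul_of_nonneg_left (by simpa [Pi.smul_apply, smul_eq_mul] using hlx j) ht.le
    · intro i
      simp only [Pi.smul_apply, smul_eq_mul]
      rw [mul_assoc]
      exact mul_le_mul_of_nonneg_left (by simpa [Pi.smul_apply, smul_eq_mul] using hly i) htα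
  · -- minimality
    rintro S hSnn hSk hSfd hScl hSrts ⟨x, y⟩ ⟨⟨hx, hy⟩, l, hl, hlx, hly⟩
    rcases hl.lt_or_eq with hl' | hl'
    · have ht : (0:ℝ) < l ^ (1 / α) := Real.rpow_pos_of_pos hl' _
      have h1 := hSrts _ hSk _ ht
      have hpow : (l ^ (1 / α)) ^ α = l := by
        rw [← Real.rpow_mul hl, one_div_mul_cancel hα.ne', Real.rpow_one]
      rw [hpow] at h1
      exact hSfd _ h1 x y hlx hy hly
    · -- l = 0
      have hly0 : y ≤ 0 := by simpa [← hl'] using hly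
      have hmem : ∀ m : ℕ, (x + (1 / ((m:ℝ) + 1)) • xk, y) ∈ S := by
        intro m
        have htm : (0:ℝ) < 1 / ((m:ℝ) + 1) := by positivity
        have h1 := hSrts _ hSk _ htm
        refine hSfd _ h1 _ y ?_ hy ?_
        · exact le_add_of_nonneg_left hx
        · exact le_trans hly0 (smul_nonneg (Real.rpow_nonneg htm.le α) hyk)
      have h2 : Filter.Tendsto (fun m : ℕ => (1 / ((m:ℝ) + 1)) • xk)
          Filter.atTop (nhds ((0:ℝ) • xk)) :=
        tendsto_one_div_add_atTop_nhds_zero_nat.smul_const xk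
      rw [zero_smul] at h2
      have h3 : Filter.Tendsto (fun m : ℕ => x + (1 / ((m:ℝ) + 1)) • xk)
          Filter.atTop (nhds (x + 0)) := tendsto_const_nhds.add h2
      rw [add_zero] at h3
      exact hScl.mem_of_tendsto (h3.prodMk_nhds tendsto_const_nhds)
        (Filter.Eventually.of_forall hmem)
end

section
/- For α ∈ (0,∞), (x_k, y_k) ∈ ℝ₊ⁿ⁺ᵖ with strictly positive components, and (x,y) ∈ ℝ₊ⁿ⁺ᵖ with x strictly positive and y ≠ 0, the Farrell input measure over the individual technology Q_{α,1}(x_k,y_k) satisfies φ^{(k)}(x,y) = inf{θ ≥ 0 : (θx, y) ∈ Q_{α,1}(x_k,y_k)} = (max_h y_h/y_{k,h})^{1/α} · (max_i x_{k,i}/x_i). -/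
/-- Closed form of the Farrell input measure over the individual technology
`Q_{α,1}(x_k, y_k)`. -/
theorem stmt11 (n p : ℕ) (α : ℝ) (hα : 0 < α)
    (xk x : Fin n → ℝ) (yk y : Fin p → ℝ)
    (hxk : ∀ i, 0 < xk i) (hyk : ∀ h, 0 < yk h)
    (hx : ∀ i, 0 < x i) (hy : 0 ≤ y) (hy0 : y ≠ 0) :
    sInf {θ : ℝ | 0 ≤ θ ∧ (θ • x, y) ∈ QSet α xk yk} =
      (⨆ h, y h / yk h) ^ (1 / α) * ⨆ i, xk i / x i := by
  set L := ⨆ h, y h / yk h with hLdef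
  set M := ⨆ i, xk i / x i with hMdef
  obtain ⟨h0, hh0⟩ : ∃ h, 0 < y h := by
    by_contra hcon
    push_neg at hcon
    exact hy0 (funext fun h => le_antisymm (hcon h) (hy h))
  have hbddy : BddAbove (Set.range fun h => y h / yk h) :=
    Set.Finite.bddAbove (Set.finite_range _)
  have hbddx : BddAbove (Set.range fun i => xk i / x i) :=
    Set.Finite.bddAbove (Set.finite_range _)
  have hLpos : 0 < L :=
    lt_of_lt_of_le (div_pos hh0 (hyk h0)) (le_ciSup hbddy h0)
  have hMnn : 0 ≤ M := Real.iSup_nonneg fun i => (div_pos (hxk i) (hx i)).le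
  have hrpos : 0 < L ^ (1 / α) := Real.rpow_pos_of_pos hLpos _
  have hcnn : 0 ≤ L ^ (1 / α) * M := mul_nonneg hrpos.le hMnn
  have hyL : ∀ h, y h ≤ L * yk h := fun h => by
    have h1 : y h / yk h ≤ L := le_ciSup hbddy h
    calc y h = (y h / yk h) * yk h := (div_mul_cancel₀ _ (hyk h).ne').symm
    _ ≤ L * yk h := mul_le_mul_of_nonneg_right h1 (hyk h).le
  have hmem : (L ^ (1 / α) * M) ∈
      {θ : ℝ | 0 ≤ θ ∧ (θ • x, y) ∈ QSet α xk yk} := by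
    refine ⟨hcnn, ⟨fun i => ?_, hy⟩, L, hLpos.le, fun i => ?_, fun h => ?_⟩
    · simpa using mul_nonneg hcnn (hx i).le
    · have hxi : xk i ≤ M * x i := (div_le_iff₀ (hx i)).1 (le_ciSup hbddx i)
      have := mul_le_mul_of_nonneg_left hxi hrpos.le
      simpa [Pi.smul_apply, smul_eq_mul, mul_assoc] using this
    · simpa [Pi.smul_apply, smul_eq_mul] using hyL h
  apply le_antisymm
  · exact csInf_le ⟨0, fun θ hθ => hθ.1⟩ hmem
  · refine le_csInf ⟨_, hmem⟩ ?_
    rintro θ ⟨hθ0, ⟨-, -⟩, l, hl0, hlx, hly⟩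
    have hLl : L ≤ l := by
      refine Real.iSup_le (fun h => (div_le_iff₀ (hyk h)).2 ?_) hl0
      simpa [Pi.smul_apply, smul_eq_mul] using hly h
    have hlpos : 0 < l := hLpos.trans_le hLl
    have hlr : 0 < l ^ (1 / α) := Real.rpow_pos_of_pos hlpos _
    have hMle : M ≤ θ / l ^ (1 / α) := by
      refine Real.iSup_le (fun i => ?_) (div_nonneg hθ0 hlr.le)
      rw [div_le_div_iff₀ (hx i) hlr]
      have := hlx i
      simp only [Pi.smul_apply, smul_eq_mul] at this
      linarith [this]
    have h1 : l ^ (1 / α) * M ≤ θ := by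
      have := mul_le_mul_of_nonneg_left hMle hlr.le
      rwa [mul_div_cancel₀ _ hlr.ne'] at this
    have h2 : L ^ (1 / α) ≤ l ^ (1 / α) :=
      Real.rpow_le_rpow hLpos.le hLl (by positivity)
    calc L ^ (1 / α) * M ≤ l ^ (1 / α) * M :=
          mul_le_mul_of_nonneg_right h2 hMnn
      _ ≤ θ := h1
end
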